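/- For a simple connected graph G on n ≥ 3 vertices with normalized Laplacian eigenvalues λ_1 ≥ ... ≥ λ_{n-1} > λ_n = 0, and any θ with λ_1 ≥ θ and n/(n-1) ≤ θ: if α < 0 or α > 1 then ∑_{i=1}^{n-1} λ_i^α ≥ θ^α + (n-θ)^α/(n-2)^{α-1}. -/

import Mathlib

open Matrix Finset

lemma bern_nonpos {y p : ℝ} (hy : 0 < y) (hp : p ≤ 0) : 1 + p * (y - 1) ≤ y ^ p := by
  rcases eq_or_lt_of_le hp with rfl | hp
  · simp
  obtain ⟨q, hpq, hq0⟩ : ∃ q, p = -q ∧ 0 < q := ⟨-p, by ring, by linarith⟩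
  subst hpq
  by_cases hz : 1 + -q * (y - 1) ≤ 0
  · exact hz.trans (Real.rpow_pos_of_pos hy _).le
  push_neg at hz
  have h1q : (0:ℝ) < 1 + q := by linarith
  have hw : q / (1 + q) + 1 / (1 + q) = 1 := by field_simp; ring
  have hgm := Real.geom_mean_le_arith_mean2_weighted
    (by positivity : (0:ℝ) ≤ q / (1+q)) (by positivity : (0:ℝ) ≤ 1 / (1+q))
    hy.le hz.le hw
  have harith : q / (1+q) * y + 1 / (1+q) * (1 + -q * (y-1)) = 1 := by
    field_simp; ring
  rw [harith] at hgm
  have hyq : (0:ℝ) ≤ y ^ (q / (1+q)) := (Real.rpow_pos_of_pos hy _).le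
  have hzq : (0:ℝ) ≤ (1 + -q * (y-1)) ^ (1 / (1+q)) := (Real.rpow_pos_of_pos hz _).le
  have hpow : (y ^ (q / (1+q)) * (1 + -q * (y-1)) ^ (1 / (1+q))) ^ (1+q) ≤ 1 := by
    calc _ ≤ (1:ℝ) ^ (1+q) := Real.rpow_le_rpow (by positivity) hgm h1q.le
    _ = 1 := Real.one_rpow _
  rw [Real.mul_rpow hyq hzq, ← Real.rpow_mul hy.le, ← Real.rpow_mul hz.le,
    div_mul_cancel₀ _ h1q.ne', div_mul_cancel₀ _ h1q.ne', Real.rpow_one] at hpow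
  rw [Real.rpow_neg hy.le, ← one_div, le_div_iff₀ (Real.rpow_pos_of_pos hy q)]
  linarith [hpow]

lemma bern {y p : ℝ} (hy : 0 < y) (hp : p ≤ 0 ∨ 1 ≤ p) : 1 + p * (y - 1) ≤ y ^ p := by
  rcases hp with hp | hp
  · exact bern_nonpos hy hp
  · have := one_add_mul_self_le_rpow_one_add (by linarith : (-1:ℝ) ≤ y - 1) hp
    simpa using this

/-- Tangent line inequality for convex rpow. -/
lemma tangent {x m p : ℝ} (hx : 0 < x) (hm : 0 < m) (hp : p ≤ 0 ∨ 1 ≤ p) :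
    m ^ p + p * m ^ (p - 1) * (x - m) ≤ x ^ p := by
  have hb := bern (y := x / m) (by positivity) hp
  have hmp : (0:ℝ) < m ^ p := Real.rpow_pos_of_pos hm p
  have hdiv : (x / m) ^ p = x ^ p / m ^ p := Real.div_rpow hx.le hm.le p
  rw [hdiv] at hb
  have h2 := mul_le_mul_of_nonneg_left hb hmp.le
  rw [mul_div_cancel₀ _ hmp.ne'] at h2
  have hsub : m ^ (p - 1) = m ^ p / m := Real.rpow_sub_one hm.ne' p
  rw [hsub]
  have h3 : m ^ p * (1 + p * (x / m - 1)) = m ^ p + p * (m ^ p / m) * (x - m) := by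
    field_simp
  linarith [h3 ▸ h2]


/-- The normalized Laplacian `D^{-1/2} (D - A) D^{-1/2}` of a simple graph. -/
noncomputable def normLap {n : ℕ} (G : SimpleGraph (Fin n)) [DecidableRel G.Adj] :
    Matrix (Fin n) (Fin n) ℝ :=
  let Dinvhalf : Matrix (Fin n) (Fin n) ℝ :=
    Matrix.diagonal fun i => (Real.sqrt (G.degree i))⁻¹
  Dinvhalf * (Matrix.diagonal (fun i => (G.degree i : ℝ)) - G.adjMatrix ℝ) * Dinvhalf

lemma degree_pos {n : ℕ} (hn : 3 ≤ n) (G : SimpleGraph (Fin n)) [DecidableRel G.Adj]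
    (hG : G.Connected) (v : Fin n) : 0 < G.degree v := by
  rw [G.degree_pos_iff_exists_adj]
  have hnt : Nontrivial (Fin n) := ⟨⟨0, by omega⟩, ⟨1, by omega⟩, by simp [Fin.ext_iff]⟩
  obtain ⟨w, hw⟩ := exists_ne v
  obtain ⟨p⟩ := hG.preconnected v w
  exact ⟨p.getVert 1, SimpleGraph.Walk.adj_snd (SimpleGraph.Walk.not_nil_of_ne (Ne.symm hw))⟩

lemma trace_normLap {n : ℕ} (hn : 3 ≤ n) (G : SimpleGraph (Fin n)) [DecidableRel G.Adj]
    (hG : G.Connected) : (normLap G).trace = n := by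
  unfold normLap
  simp only [Matrix.trace, Matrix.diag, Matrix.mul_diagonal, Matrix.diagonal_mul,
    Matrix.sub_apply, Matrix.diagonal_apply_eq, SimpleGraph.adjMatrix_apply]
  have : ∀ i : Fin n, (Real.sqrt (G.degree i))⁻¹ * ((G.degree i : ℝ) -
      if G.Adj i i then 1 else 0) * (Real.sqrt (G.degree i))⁻¹ = 1 := by
    intro i
    have hd : (0:ℝ) < (G.degree i : ℝ) := by exact_mod_cast degree_pos hn G hG i
    rw [if_neg (G.irrefl), sub_zero, mul_comm, ← mul_assoc, ← mul_inv,
      Real.mul_self_sqrt hd.le, inv_mul_cancel₀ hd.ne']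
  rw [Finset.sum_congr rfl fun i _ => this i]
  simp

lemma sum_eig {n : ℕ} (hn : 3 ≤ n) (G : SimpleGraph (Fin n)) [DecidableRel G.Adj]
    (hG : G.Connected) (hH : (normLap G).IsHermitian) :
    ∑ i, hH.eigenvalues i = n := by
  have h1 : (normLap G).trace = ∑ i, hH.eigenvalues i := by
    simpa using hH.trace_eq_sum_eigenvalues
  rw [← h1, trace_normLap hn G hG]


theorem sAlpha_lower_bound {n : ℕ} (hn : 3 ≤ n) (G : SimpleGraph (Fin n)) [DecidableRel G.Adj]
    (hG : G.Connected) (hH : (normLap G).IsHermitian)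
    (lam : Fin n → ℝ) (hanti : Antitone lam)
    (hperm : ∃ σ : Equiv.Perm (Fin n), lam = hH.eigenvalues ∘ σ)
    (hlast : lam ⟨n - 1, by omega⟩ = 0) (hpos : lam ⟨n - 2, by omega⟩ > 0)
    (θ α : ℝ) (hθ1 : lam ⟨0, by omega⟩ ≥ θ) (hθ2 : (n : ℝ) / ((n : ℝ) - 1) ≤ θ)
    (hα : α < 0 ∨ 1 < α) :
    (∑ i ∈ Finset.univ.filter (fun i : Fin n => (i : ℕ) < n - 1), lam i ^ α) ≥
      θ ^ α + ((n : ℝ) - θ) ^ α / ((n : ℝ) - 2) ^ (α - 1) := by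
  have hα' : α ≤ 0 ∨ 1 ≤ α := hα.imp le_of_lt le_of_lt
  set N : ℝ := (n : ℝ) with hN
  have hN3 : (3:ℝ) ≤ N := by rw [hN]; exact_mod_cast hn
  have hN1 : (0:ℝ) < N - 1 := by linarith
  have hN2 : (0:ℝ) < N - 2 := by linarith
  -- total eigenvalue sum
  have hsumall : ∑ i, lam i = N := by
    obtain ⟨σ, hσ⟩ := hperm
    rw [hσ]
    simpa using Equiv.sum_comp σ hH.eigenvalues ▸ sum_eig hn G hG hH
  set S := Finset.univ.filter (fun i : Fin n => (i : ℕ) < n - 1) with hS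
  have hcompl : Finset.univ.filter (fun i : Fin n => ¬ (i : ℕ) < n - 1)
      = {(⟨n - 1, by omega⟩ : Fin n)} := by
    ext i
    simp only [Finset.mem_filter, Finset.mem_univ, true_and, Finset.mem_singleton, Fin.ext_iff]
    have := i.isLt
    omega
  have hsumS : ∑ i ∈ S, lam i = N := by
    have h := Finset.sum_filter_add_sum_filter_not Finset.univ
      (fun i : Fin n => (i : ℕ) < n - 1) lam
    rw [hcompl, Finset.sum_singleton, hlast, add_zero, hsumall] at h
    exact h
  have hScardNat : S.card = n - 1 := by
    have h := Finset.card_filter_add_card_filter_not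
      (s := Finset.univ) (p := fun i : Fin n => (i : ℕ) < n - 1)
    rw [hcompl, Finset.card_singleton, Finset.card_univ, Fintype.card_fin, ← hS] at h
    omega
  -- positivity on S
  have hposS : ∀ i ∈ S, 0 < lam i := by
    intro i hi
    rw [hS, Finset.mem_filter] at hi
    have hle : i ≤ (⟨n - 2, by omega⟩ : Fin n) := by
      rw [Fin.le_def]; simp only []; omega
    exact lt_of_lt_of_le hpos (hanti hle)
  set z : Fin n := ⟨0, by omega⟩ with hz
  set a : ℝ := lam z with ha
  have hzS : z ∈ S := by rw [hS, Finset.mem_filter]; exact ⟨Finset.mem_univ _, by simp [hz]; omega⟩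
  set S' := S.erase z with hS'
  have hS'card : (S'.card : ℝ) = N - 2 := by
    rw [hS', Finset.card_erase_of_mem hzS, hScardNat,
      (by omega : n - 1 - 1 = n - 2), hN, Nat.cast_sub (by omega : 2 ≤ n)]
    norm_num
  have hsumS' : ∑ i ∈ S', lam i = N - a := by
    have h := Finset.sum_erase_add S lam hzS
    rw [hsumS] at h; linarith
  have hS'ne : S'.Nonempty := by
    refine ⟨⟨1, by omega⟩, ?_⟩
    rw [hS', Finset.mem_erase, hS, Finset.mem_filter]
    refine ⟨by simp [hz, Fin.ext_iff], Finset.mem_univ _, by simp; omega⟩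
  have hNa : 0 < N - a := by
    rw [← hsumS']
    exact Finset.sum_pos (fun i hi => hposS i (Finset.mem_of_mem_erase hi)) hS'ne
  have hθpos : 0 < θ := lt_of_lt_of_le (by positivity) hθ2
  have hapos : 0 < a := lt_of_lt_of_le hθpos hθ1
  set m : ℝ := (N - a) / (N - 2) with hm
  have hmpos : 0 < m := by positivity
  set v : ℝ := (N - θ) / (N - 2) with hv
  have hNθ : 0 < N - θ := by linarith [hθ1]
  have hvpos : 0 < v := by positivity
  -- Jensen step on S'
  have hJ : (N - 2) * m ^ α ≤ ∑ i ∈ S', lam i ^ α := by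
    have h1 : ∑ i ∈ S', (m ^ α + α * m ^ (α - 1) * (lam i - m)) ≤ ∑ i ∈ S', lam i ^ α :=
      Finset.sum_le_sum fun i hi => tangent (hposS i (Finset.mem_of_mem_erase hi)) hmpos hα'
    have h2 : ∑ i ∈ S', (m ^ α + α * m ^ (α - 1) * (lam i - m)) = (N - 2) * m ^ α := by
      rw [Finset.sum_add_distrib, Finset.sum_const, ← Finset.mul_sum,
        Finset.sum_sub_distrib, hsumS', Finset.sum_const, nsmul_eq_mul, nsmul_eq_mul, hS'card]
      have : N - a - (N - 2) * m = 0 := by rw [hm]; field_simp; ring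
      rw [this, mul_zero, add_zero]
    linarith [h2 ▸ h1]
  -- split off the top eigenvalue
  have hsplit : ∑ i ∈ S, lam i ^ α = a ^ α + ∑ i ∈ S', lam i ^ α := by
    rw [hS']
    rw [← Finset.sum_erase_add S _ hzS, ← ha]
    ring
  -- monotonicity step
  have hvθ : v ≤ θ := by
    rw [hv, div_le_iff₀ hN2]
    have := (div_le_iff₀ hN1).mp hθ2
    nlinarith
  have t1 : θ ^ α + α * θ ^ (α - 1) * (a - θ) ≤ a ^ α := tangent hapos hθpos hα'
  have t2 : v ^ α + α * v ^ (α - 1) * (m - v) ≤ m ^ α := tangent hmpos hvpos hα'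
  have hmv : m - v = (θ - a) / (N - 2) := by rw [hm, hv]; field_simp; ring
  have h5 : (N - 2) * (α * v ^ (α - 1) * (m - v)) = α * v ^ (α - 1) * (θ - a) := by
    rw [hmv]; field_simp
  have t2' := mul_le_mul_of_nonneg_left t2 hN2.le
  rw [mul_add, h5] at t2'
  have hkey : 0 ≤ α * θ ^ (α - 1) * (a - θ) + α * v ^ (α - 1) * (θ - a) := by
    have hre : α * θ ^ (α - 1) * (a - θ) + α * v ^ (α - 1) * (θ - a)
        = (α * (a - θ)) * (θ ^ (α - 1) - v ^ (α - 1)) := by ring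
    rw [hre]
    rcases hα with hneg | hgt
    · have h1 : α * (a - θ) ≤ 0 := mul_nonpos_of_nonpos_of_nonneg hneg.le (by linarith [hθ1])
      have h2 : θ ^ (α - 1) - v ^ (α - 1) ≤ 0 := by
        have : θ ^ (α - 1) ≤ v ^ (α - 1) :=
          Real.rpow_le_rpow_of_nonpos hvpos hvθ (by linarith)
        linarith
      nlinarith [mul_nonneg (neg_nonneg.2 h1) (neg_nonneg.2 h2)]
    · apply mul_nonneg
      · exact mul_nonneg (by linarith) (by linarith [hθ1])
      · have : v ^ (α - 1) ≤ θ ^ (α - 1) :=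
          Real.rpow_le_rpow hvpos.le hvθ (by linarith)
        linarith
  have hveq : (N - θ) ^ α / (N - 2) ^ (α - 1) = (N - 2) * v ^ α := by
    rw [hv, Real.div_rpow hNθ.le hN2.le, Real.rpow_sub_one hN2.ne']
    rw [div_div_eq_mul_div]
    ring
  rw [ge_iff_le, hsplit, hveq]
  linarith [hJ, t1, t2', hkey]
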